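/- Let X and Y be Polish spaces, c a cost function on X × Y, and fix μ a probability measure on X. Then the transport dependency τ_c is convex on the set of probability measures on X × Y whose first marginal equals μ: for any two such measures γ₀, γ₁ and any t ∈ [0,1], τ_c((1−t)γ₀ + tγ₁) ≤ (1−t)τ_c(γ₀) + tτ_c(γ₁). The analogous statement holds for the set of measures with fixed second marginal ν. -/

import Mathlib

open MeasureTheory ENNReal Filter Topology

/-- The optimal transport cost between two measures `μ` and `ν` on a space `Z`
with base cost `c`. -/
noncomputable def otCost {Z : Type*} [MeasurableSpace Z]
    (c : Z → Z → ℝ≥0∞) (μ ν : Measure Z) : ℝ≥0∞ :=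
  ⨅ (π : Measure (Z × Z)) (_ : π.map Prod.fst = μ ∧ π.map Prod.snd = ν),
    ∫⁻ p, c p.1 p.2 ∂π

/-- The transport dependency of a measure `γ` on `X × Y`. -/
noncomputable def tdep {X Y : Type*} [MeasurableSpace X] [MeasurableSpace Y]
    (c : X × Y → X × Y → ℝ≥0∞) (γ : Measure (X × Y)) : ℝ≥0∞ :=
  otCost c γ ((γ.map Prod.fst).prod (γ.map Prod.snd))

lemma smul_prod' {α β : Type*} [MeasurableSpace α] [MeasurableSpace β]
    (a : ℝ≥0∞) (μ : Measure α) (ν : Measure β)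
    [SFinite μ] [SFinite ν] : (a • μ).prod ν = a • (μ.prod ν) := by
  ext s hs
  rw [Measure.prod_apply hs, Measure.smul_apply, Measure.prod_apply hs,
    lintegral_smul_measure, smul_eq_mul]

lemma prod_smul' {α β : Type*} [MeasurableSpace α] [MeasurableSpace β]
    (a : ℝ≥0∞) (μ : Measure α) (ν : Measure β)
    [SFinite μ] [SFinite ν] : μ.prod (a • ν) = a • (μ.prod ν) := by
  ext s hs
  rw [Measure.prod_apply hs, Measure.smul_apply, Measure.prod_apply hs, smul_eq_mul,
    ← lintegral_const_mul _ (measurable_measure_prodMk_left hs)]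
  simp [mul_comm]

lemma otCost_le {Z : Type*} [MeasurableSpace Z] (c : Z → Z → ℝ≥0∞) {μ ν : Measure Z}
    (π : Measure (Z × Z)) (h : π.map Prod.fst = μ ∧ π.map Prod.snd = ν) :
    otCost c μ ν ≤ ∫⁻ p, c p.1 p.2 ∂π :=
  iInf₂_le π h

lemma exists_coupling_approx {Z : Type*} [MeasurableSpace Z] (c : Z → Z → ℝ≥0∞)
    (μ ν : Measure Z) [IsProbabilityMeasure μ] [IsProbabilityMeasure ν]
    (a : ℝ≥0∞) (ha : a ≤ 1) (hfin : a * otCost c μ ν ≠ ∞) (ε : ℝ≥0∞) (hε : 0 < ε) :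
    ∃ π : Measure (Z × Z), (π.map Prod.fst = μ ∧ π.map Prod.snd = ν) ∧
      a * ∫⁻ p, c p.1 p.2 ∂π ≤ a * otCost c μ ν + ε := by
  by_cases ha0 : a = 0
  · refine ⟨μ.prod ν, ⟨by simp, by simp⟩, ?_⟩
    simp [ha0]
  · have hot : otCost c μ ν ≠ ∞ := by
      intro h
      exact hfin (by rw [h, ENNReal.mul_top ha0])
    have hlt : otCost c μ ν < otCost c μ ν + ε :=
      ENNReal.lt_add_right hot hε.ne'
    rw [otCost] at hlt
    obtain ⟨π, hπ, hπlt⟩ := by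
      simpa only [iInf_lt_iff, exists_prop] using hlt
    refine ⟨π, hπ, ?_⟩
    calc a * ∫⁻ p, c p.1 p.2 ∂π ≤ a * (otCost c μ ν + ε) := by
          exact mul_le_mul_right hπlt.le a
      _ = a * otCost c μ ν + a * ε := by rw [mul_add]
      _ ≤ a * otCost c μ ν + ε := by
          gcongr
          exact mul_le_of_le_one_left zero_le ha

lemma otCost_convex {Z : Type*} [MeasurableSpace Z] (c : Z → Z → ℝ≥0∞)
    (μ₀ ν₀ μ₁ ν₁ : Measure Z) [IsProbabilityMeasure μ₀] [IsProbabilityMeasure ν₀]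
    [IsProbabilityMeasure μ₁] [IsProbabilityMeasure ν₁]
    (a b : ℝ≥0∞) (ha : a ≤ 1) (hb : b ≤ 1) :
    otCost c (a • μ₀ + b • μ₁) (a • ν₀ + b • ν₁)
      ≤ a * otCost c μ₀ ν₀ + b * otCost c μ₁ ν₁ := by
  refine ENNReal.le_of_forall_pos_le_add fun ε hε htop => ?_
  have hε' : (0 : ℝ≥0∞) < ε / 2 := by
    simp [ENNReal.div_pos_iff, hε.ne']
  have hfa : a * otCost c μ₀ ν₀ ≠ ∞ := ne_top_of_le_ne_top htop.ne le_self_add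
  have hfb : b * otCost c μ₁ ν₁ ≠ ∞ := ne_top_of_le_ne_top htop.ne le_add_self
  obtain ⟨π₀, hπ₀, h₀⟩ := exists_coupling_approx c μ₀ ν₀ a ha hfa _ hε'
  obtain ⟨π₁, hπ₁, h₁⟩ := exists_coupling_approx c μ₁ ν₁ b hb hfb _ hε'
  have hle : otCost c (a • μ₀ + b • μ₁) (a • ν₀ + b • ν₁)
      ≤ ∫⁻ p, c p.1 p.2 ∂(a • π₀ + b • π₁) := by
    refine otCost_le c _ ⟨?_, ?_⟩
    · rw [Measure.map_add _ _ measurable_fst, Measure.map_smul, Measure.map_smul,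
        hπ₀.1, hπ₁.1]
    · rw [Measure.map_add _ _ measurable_snd, Measure.map_smul, Measure.map_smul,
        hπ₀.2, hπ₁.2]
  calc otCost c (a • μ₀ + b • μ₁) (a • ν₀ + b • ν₁)
      ≤ ∫⁻ p, c p.1 p.2 ∂(a • π₀ + b • π₁) := hle
    _ = a * ∫⁻ p, c p.1 p.2 ∂π₀ + b * ∫⁻ p, c p.1 p.2 ∂π₁ := by
        rw [lintegral_add_measure, lintegral_smul_measure, lintegral_smul_measure, smul_eq_mul, smul_eq_mul]
    _ ≤ (a * otCost c μ₀ ν₀ + ε / 2) + (b * otCost c μ₁ ν₁ + ε / 2) := add_le_add h₀ h₁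
    _ = a * otCost c μ₀ ν₀ + b * otCost c μ₁ ν₁ + ε := by
        rw [add_add_add_comm, ENNReal.add_halves]

theorem tdep_convex
    {X Y : Type*} [TopologicalSpace X] [PolishSpace X] [MeasurableSpace X] [BorelSpace X]
    [TopologicalSpace Y] [PolishSpace Y] [MeasurableSpace Y] [BorelSpace Y]
    (c : X × Y → X × Y → ℝ≥0∞)
    (hc_lsc : LowerSemicontinuous (Function.uncurry c))
    (hc_symm : ∀ z₁ z₂, c z₁ z₂ = c z₂ z₁)
    (hc_diag : ∀ z, c z z = 0)
    (γ₀ γ₁ : Measure (X × Y)) [IsProbabilityMeasure γ₀] [IsProbabilityMeasure γ₁]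
    (t : ℝ≥0∞) (ht : t ≤ 1)
    (hmarg : (γ₀.map Prod.fst = γ₁.map Prod.fst) ∨ (γ₀.map Prod.snd = γ₁.map Prod.snd)) :
    tdep c ((1 - t) • γ₀ + t • γ₁) ≤ (1 - t) * tdep c γ₀ + t * tdep c γ₁ := by
  set a := 1 - t with ha_def
  have hab : a + t = 1 := tsub_add_cancel_of_le ht
  have ha1 : a ≤ 1 := tsub_le_self
  set γt := a • γ₀ + t • γ₁ with hγt
  have hmapf : γt.map Prod.fst = a • γ₀.map Prod.fst + t • γ₁.map Prod.fst := by
    rw [hγt, Measure.map_add _ _ measurable_fst, Measure.map_smul, Measure.map_smul]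
  have hmaps : γt.map Prod.snd = a • γ₀.map Prod.snd + t • γ₁.map Prod.snd := by
    rw [hγt, Measure.map_add _ _ measurable_snd, Measure.map_smul, Measure.map_smul]
  have hγ0 : IsProbabilityMeasure ((γ₀.map Prod.fst).prod (γ₀.map Prod.snd)) := by
    have h1 : IsProbabilityMeasure (γ₀.map Prod.fst) :=
      Measure.isProbabilityMeasure_map measurable_fst.aemeasurable
    have h2 : IsProbabilityMeasure (γ₀.map Prod.snd) :=
      Measure.isProbabilityMeasure_map measurable_snd.aemeasurable
    infer_instance
  have hγ1 : IsProbabilityMeasure ((γ₁.map Prod.fst).prod (γ₁.map Prod.snd)) := by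
    have h1 : IsProbabilityMeasure (γ₁.map Prod.fst) :=
      Measure.isProbabilityMeasure_map measurable_fst.aemeasurable
    have h2 : IsProbabilityMeasure (γ₁.map Prod.snd) :=
      Measure.isProbabilityMeasure_map measurable_snd.aemeasurable
    infer_instance
  have h1 : IsProbabilityMeasure (γ₀.map Prod.fst) :=
    Measure.isProbabilityMeasure_map measurable_fst.aemeasurable
  have h2 : IsProbabilityMeasure (γ₀.map Prod.snd) :=
    Measure.isProbabilityMeasure_map measurable_snd.aemeasurable
  have h3 : IsProbabilityMeasure (γ₁.map Prod.fst) :=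
    Measure.isProbabilityMeasure_map measurable_fst.aemeasurable
  have h4 : IsProbabilityMeasure (γ₁.map Prod.snd) :=
    Measure.isProbabilityMeasure_map measurable_snd.aemeasurable
  have hprod : (γt.map Prod.fst).prod (γt.map Prod.snd)
      = a • ((γ₀.map Prod.fst).prod (γ₀.map Prod.snd))
        + t • ((γ₁.map Prod.fst).prod (γ₁.map Prod.snd)) := by
    rcases hmarg with hm | hm
    · have hfst : γt.map Prod.fst = γ₀.map Prod.fst := by
        rw [hmapf, hm, ← add_smul, hab, one_smul]
      rw [hfst, hmaps, Measure.prod_add, prod_smul', prod_smul', hm]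
    · have hsnd : γt.map Prod.snd = γ₀.map Prod.snd := by
        rw [hmaps, hm, ← add_smul, hab, one_smul]
      rw [hsnd, hmapf, Measure.add_prod, smul_prod', smul_prod', hm]
  rw [tdep, tdep, tdep, hprod]
  exact otCost_convex c γ₀ ((γ₀.map Prod.fst).prod (γ₀.map Prod.snd))
    γ₁ ((γ₁.map Prod.fst).prod (γ₁.map Prod.snd)) a t ha1 ht
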